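/- There exist n ≥ 1 and a subgroup Γ of the group of invertible affine transformations of ℝⁿ such that Γ acts properly discontinuously, freely and cocompactly on ℝⁿ, and Γ has no abelian subgroup of finite index (in particular Γ is not virtually ℤⁿ). -/

import Mathlib

noncomputable section AM

private def Bmap : (Fin 3 → ℝ) →ₗ[ℝ] (Fin 3 → ℝ) where
  toFun x := ![2 * x 0 + x 1, x 0 + x 1, x 2]
  map_add' x y := by funext i; fin_cases i <;> simp <;> ring
  map_smul' c x := by funext i; fin_cases i <;> simp <;> ring

private def Bmap' : (Fin 3 → ℝ) →ₗ[ℝ] (Fin 3 → ℝ) where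
  toFun x := ![x 0 - x 1, -x 0 + 2 * x 1, x 2]
  map_add' x y := by funext i; fin_cases i <;> simp <;> ring
  map_smul' c x := by funext i; fin_cases i <;> simp <;> ring

private def B : (Fin 3 → ℝ) ≃ₗ[ℝ] (Fin 3 → ℝ) :=
  LinearEquiv.ofLinear Bmap Bmap'
    (by ext x i; fin_cases i <;> simp [Bmap, Bmap'] <;> ring)
    (by ext x i; fin_cases i <;> simp [Bmap, Bmap'] <;> ring)

private def Amap : (Fin 2 → ℤ) →ₗ[ℤ] (Fin 2 → ℤ) where
  toFun w := ![2 * w 0 + w 1, w 0 + w 1]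
  map_add' x y := by funext i; fin_cases i <;> simp <;> ring
  map_smul' c x := by funext i; fin_cases i <;> simp <;> ring

private def Amap' : (Fin 2 → ℤ) →ₗ[ℤ] (Fin 2 → ℤ) where
  toFun w := ![w 0 - w 1, -w 0 + 2 * w 1]
  map_add' x y := by funext i; fin_cases i <;> simp <;> ring
  map_smul' c x := by funext i; fin_cases i <;> simp <;> ring

private def Az : (Fin 2 → ℤ) ≃ₗ[ℤ] (Fin 2 → ℤ) :=
  LinearEquiv.ofLinear Amap Amap'
    (by ext x i; fin_cases i <;> simp [Amap, Amap'] <;> ring)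
    (by ext x i; fin_cases i <;> simp [Amap, Amap'] <;> ring)

private lemma B_apply (x : Fin 3 → ℝ) : B x = ![2 * x 0 + x 1, x 0 + x 1, x 2] := rfl
private lemma Binv_apply (x : Fin 3 → ℝ) : B⁻¹ x = ![x 0 - x 1, -x 0 + 2 * x 1, x 2] := rfl
private lemma Az_apply (w : Fin 2 → ℤ) : Az w = ![2 * w 0 + w 1, w 0 + w 1] := rfl
private lemma Azinv_apply (w : Fin 2 → ℤ) : Az⁻¹ w = ![w 0 - w 1, -w 0 + 2 * w 1] := rfl

private def iv (v : Fin 2 → ℤ) (k : ℤ) : Fin 3 → ℝ := ![(v 0 : ℝ), (v 1 : ℝ), (k : ℝ)]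

private lemma iv_add (v w : Fin 2 → ℤ) (k l : ℤ) : iv v k + iv w l = iv (v + w) (k + l) := by
  funext i; fin_cases i <;> simp [iv] <;> push_cast <;> ring

private lemma zpow_apply_step (k : ℤ) (x : Fin 3 → ℝ) : B ^ (k + 1) = B ^ k * B := by
  rw [zpow_add_one]

private lemma B_iv (v : Fin 2 → ℤ) (k : ℤ) : B (iv v k) = iv (Az v) k := by
  funext i; fin_cases i <;> simp [iv, B_apply, Az_apply] <;> push_cast <;> ring

private lemma Binv_iv (v : Fin 2 → ℤ) (k : ℤ) : B⁻¹ (iv v k) = iv (Az⁻¹ v) k := by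
  funext i; fin_cases i <;> simp [iv, Binv_apply, Azinv_apply] <;> push_cast <;> ring


private lemma Bz_iv (m : ℤ) : ∀ (v : Fin 2 → ℤ) (k : ℤ), (B ^ m) (iv v k) = iv ((Az ^ m) v) k := by
  induction m using Int.induction_on with
  | zero => intro v k; simp
  | succ n ih =>
      intro v k
      rw [zpow_add_one, zpow_add_one]
      show (B ^ (n:ℤ)) (B (iv v k)) = iv ((Az ^ (n:ℤ)) (Az v)) k
      rw [B_iv, ih]
  | pred n ih =>
      intro v k
      rw [zpow_sub_one, zpow_sub_one]
      show (B ^ (-n:ℤ)) (B⁻¹ (iv v k)) = iv ((Az ^ (-n:ℤ)) (Az⁻¹ v)) k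
      rw [Binv_iv, ih]

private lemma Bz_coord2 (m : ℤ) : ∀ (x : Fin 3 → ℝ), ((B ^ m) x) 2 = x 2 := by
  induction m using Int.induction_on with
  | zero => intro x; simp
  | succ n ih =>
      intro x
      rw [zpow_add_one]
      show ((B ^ (n:ℤ)) (B x)) 2 = x 2
      rw [ih]; rfl
  | pred n ih =>
      intro x
      rw [zpow_sub_one]
      show ((B ^ (-n:ℤ)) (B⁻¹ x)) 2 = x 2
      rw [ih]; rfl

private def rho (v : Fin 2 → ℤ) (k : ℤ) : (Fin 3 → ℝ) ≃ᵃ[ℝ] (Fin 3 → ℝ) :=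
  (B ^ k).toAffineEquiv.trans (AffineEquiv.constVAdd ℝ (Fin 3 → ℝ) (iv v k))

private lemma rho_apply (v : Fin 2 → ℤ) (k : ℤ) (x : Fin 3 → ℝ) :
    rho v k x = iv v k + (B ^ k) x := by
  simp [rho, AffineEquiv.constVAdd_apply]

private lemma rho_one : rho 0 0 = 1 := by
  apply AffineEquiv.ext
  intro x
  rw [rho_apply]
  funext i; fin_cases i <;> simp [iv]

private lemma rho_mul (v w : Fin 2 → ℤ) (k l : ℤ) :
    rho v k * rho w l = rho (v + (Az ^ k) w) (k + l) := by
  apply AffineEquiv.ext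
  intro x
  show rho v k (rho w l x) = _
  rw [rho_apply, rho_apply, rho_apply, map_add, Bz_iv, ← add_assoc, iv_add]
  congr 1
  rw [zpow_add]
  rfl

private lemma rho_param_eq {v w : Fin 2 → ℤ} {k l : ℤ} (h : rho v k = rho w l) :
    v = w ∧ k = l := by
  have h0 : rho v k 0 = rho w l 0 := by rw [h]
  rw [rho_apply, rho_apply, map_zero, map_zero, add_zero, add_zero] at h0
  have h2 : (k : ℝ) = (l : ℝ) := congrFun h0 2
  have hk : k = l := by exact_mod_cast h2
  refine ⟨?_, hk⟩
  funext i
  fin_cases i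
  · have := congrFun h0 0; simpa [iv] using this
  · have := congrFun h0 1; simpa [iv] using this

private lemma rho_inv (v : Fin 2 → ℤ) (k : ℤ) :
    (rho v k)⁻¹ = rho (-((Az ^ (-k)) v)) (-k) := by
  rw [eq_comm, eq_inv_iff_mul_eq_one, rho_mul]
  rw [show (-((Az ^ (-k)) v) + (Az ^ (-k)) v) = 0 by ring, show (-k + k) = 0 by ring, rho_one]

private def Gam : Subgroup ((Fin 3 → ℝ) ≃ᵃ[ℝ] (Fin 3 → ℝ)) where
  carrier := {γ | ∃ v k, γ = rho v k}
  one_mem' := ⟨0, 0, rho_one.symm⟩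
  mul_mem' := by
    rintro _ _ ⟨v, k, rfl⟩ ⟨w, l, rfl⟩
    exact ⟨v + (Az ^ k) w, k + l, rho_mul v w k l⟩
  inv_mem' := by
    rintro _ ⟨v, k, rfl⟩
    exact ⟨-((Az ^ (-k)) v), -k, rho_inv v k⟩

private lemma abs_le_norm (x : Fin 3 → ℝ) (i : Fin 3) : |x i| ≤ ‖x‖ :=
  (Real.norm_eq_abs (x i)) ▸ norm_le_pi_norm x i

private lemma norm_B_le (x : Fin 3 → ℝ) : ‖B x‖ ≤ 3 * ‖x‖ := by
  rw [pi_norm_le_iff_of_nonneg (by positivity)]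
  intro i
  have h0 := abs_le_norm x 0
  have h1 := abs_le_norm x 1
  have h2 := abs_le_norm x 2
  fin_cases i <;> simp [B_apply, Real.norm_eq_abs] <;>
  · rw [abs_le] at h0 h1 h2 ⊢
    constructor <;> nlinarith [norm_nonneg x]

private lemma norm_Binv_le (x : Fin 3 → ℝ) : ‖B⁻¹ x‖ ≤ 3 * ‖x‖ := by
  rw [pi_norm_le_iff_of_nonneg (by positivity)]
  intro i
  have h0 := abs_le_norm x 0
  have h1 := abs_le_norm x 1
  have h2 := abs_le_norm x 2
  fin_cases i <;> simp [Binv_apply, Real.norm_eq_abs] <;>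
  · rw [abs_le] at h0 h1 h2 ⊢
    constructor <;> nlinarith [norm_nonneg x]

private lemma norm_Bz_le (m : ℤ) : ∀ x : Fin 3 → ℝ, ‖(B ^ m) x‖ ≤ 3 ^ m.natAbs * ‖x‖ := by
  induction m using Int.induction_on with
  | zero => intro x; simp
  | succ n ih =>
      intro x
      rw [zpow_add_one]
      have h1 : ((B ^ (n:ℤ)) (B x)) = (B ^ (n:ℤ) * B) x := rfl
      calc ‖(B ^ (n:ℤ) * B) x‖ = ‖(B ^ (n:ℤ)) (B x)‖ := rfl
        _ ≤ 3 ^ (n:ℤ).natAbs * ‖B x‖ := ih _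
        _ ≤ 3 ^ (n:ℤ).natAbs * (3 * ‖x‖) := by
            exact mul_le_mul_of_nonneg_left (norm_B_le x) (by positivity)
        _ = 3 ^ ((n:ℤ)+1).natAbs * ‖x‖ := by
            rw [show ((n:ℤ)+1).natAbs = (n:ℤ).natAbs + 1 by omega, pow_succ]; ring
  | pred n ih =>
      intro x
      rw [zpow_sub_one]
      calc ‖(B ^ (-n:ℤ) * B⁻¹) x‖ = ‖(B ^ (-n:ℤ)) (B⁻¹ x)‖ := rfl
        _ ≤ 3 ^ (-n:ℤ).natAbs * ‖B⁻¹ x‖ := ih _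
        _ ≤ 3 ^ (-n:ℤ).natAbs * (3 * ‖x‖) := by
            exact mul_le_mul_of_nonneg_left (norm_Binv_le x) (by positivity)
        _ = 3 ^ ((-n:ℤ)-1).natAbs * ‖x‖ := by
            rw [show ((-n:ℤ)-1).natAbs = (-n:ℤ).natAbs + 1 by omega, pow_succ]; ring

-- freeness
private lemma free_lemma (v : Fin 2 → ℤ) (k : ℤ) (x : Fin 3 → ℝ) (h : rho v k x = x) :
    v = 0 ∧ k = 0 := by
  rw [rho_apply] at h
  have hivk : iv v k 2 = (k : ℝ) := rfl
  have hB2 := Bz_coord2 k x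
  have hk : k = 0 := by
    have h2 : (k : ℝ) + x 2 = x 2 := by
      have := congrFun h 2
      simpa [Pi.add_apply, hivk, hB2] using this
    have : (k : ℝ) = 0 := by linarith
    exact_mod_cast this
  subst hk
  have hx : ∀ i, iv v 0 i + x i = x i := by
    intro i
    have := congrFun h i
    simpa [Pi.add_apply] using this
  refine ⟨?_, rfl⟩
  have hv0 : v 0 = 0 := by have := hx 0; simp [iv] at this; exact this
  have hv1 : v 1 = 0 := by have := hx 1; simp [iv] at this; exact this
  funext i; fin_cases i
  · exact hv0
  · exact hv1

-- cocompactness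
private lemma cocompact_lemma (x : Fin 3 → ℝ) :
    ∃ v k, x ∈ (rho v k) '' (Set.Icc (0 : Fin 3 → ℝ) 1) := by
  set k : ℤ := ⌊x 2⌋ with hk
  set u : Fin 3 → ℝ := (B ^ (-k)) x with hu
  set w : Fin 2 → ℤ := ![⌊u 0⌋, ⌊u 1⌋] with hw
  have hu2 : u 2 = x 2 := Bz_coord2 (-k) x
  have hw0 : iv w k 0 = (⌊u 0⌋ : ℝ) := by simp [iv, hw]
  have hw1 : iv w k 1 = (⌊u 1⌋ : ℝ) := by simp [iv, hw]
  have hw2 : iv w k 2 = (⌊x 2⌋ : ℝ) := by simp [iv, hk]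
  refine ⟨(Az ^ k) w, k, u - iv w k, ⟨?_, ?_⟩, ?_⟩
  · intro i
    fin_cases i <;> simp only [Pi.sub_apply, Pi.zero_apply]
    · rw [show ((⟨0, by omega⟩ : Fin 3)) = (0 : Fin 3) from rfl, hw0]
      linarith [Int.floor_le (u 0)]
    · rw [show ((⟨1, by omega⟩ : Fin 3)) = (1 : Fin 3) from rfl, hw1]
      linarith [Int.floor_le (u 1)]
    · rw [show ((⟨2, by omega⟩ : Fin 3)) = (2 : Fin 3) from rfl, hw2, hu2]
      linarith [Int.floor_le (x 2)]
  · intro i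
    fin_cases i <;> simp only [Pi.sub_apply, Pi.one_apply]
    · rw [show ((⟨0, by omega⟩ : Fin 3)) = (0 : Fin 3) from rfl, hw0]
      linarith [Int.lt_floor_add_one (u 0)]
    · rw [show ((⟨1, by omega⟩ : Fin 3)) = (1 : Fin 3) from rfl, hw1]
      linarith [Int.lt_floor_add_one (u 1)]
    · rw [show ((⟨2, by omega⟩ : Fin 3)) = (2 : Fin 3) from rfl, hw2, hu2]
      linarith [Int.lt_floor_add_one (x 2)]
  · rw [rho_apply, map_sub, Bz_iv]
    have h1 : (B ^ k) u = x := by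
      rw [hu]
      have : (B ^ k) ((B ^ (-k)) x) = (B ^ k * B ^ (-k)) x := rfl
      rw [this, ← zpow_add]
      simp
    rw [h1]
    abel

-- proper discontinuity
private lemma pd_lemma (K : Set (Fin 3 → ℝ)) (hK : IsCompact K) :
    {p : (Fin 2 → ℤ) × ℤ | ((rho p.1 p.2) '' K ∩ K).Nonempty}.Finite := by
  obtain ⟨r, hr⟩ := hK.isBounded.subset_closedBall 0
  set R : ℝ := max r 0 with hR
  have hR0 : 0 ≤ R := le_max_right _ _
  have hKR : ∀ x ∈ K, ‖x‖ ≤ R := by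
    intro x hx
    have := hr hx
    rw [Metric.mem_closedBall, dist_zero_right] at this
    exact le_trans this (le_max_left _ _)
  set N : ℕ := ⌈2 * R⌉₊ with hN
  set Mz : ℤ := ⌈R + 3 ^ N * R⌉ with hMz
  have hfin : (((Set.univ : Set (Fin 2)).pi fun _ => Set.Icc (-Mz) Mz) ×ˢ
      (Set.Icc (-(N:ℤ)) (N:ℤ))).Finite :=
    Set.Finite.prod (Set.Finite.pi fun _ => Set.finite_Icc _ _) (Set.finite_Icc _ _)
  refine hfin.subset ?_
  rintro ⟨v, k⟩ ⟨y, ⟨x, hxK, hxy⟩, hyK⟩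
  have hx : ‖x‖ ≤ R := hKR x hxK
  have hy : ‖y‖ ≤ R := hKR y hyK
  rw [← hxy, rho_apply] at hy
  -- bound on k
  have hcoord : (iv v k + (B ^ k) x) 2 = (k : ℝ) + x 2 := by
    simp [Pi.add_apply, Bz_coord2, iv]
  have habs2 : |(k : ℝ) + x 2| ≤ R := by
    rw [← hcoord]
    exact le_trans (abs_le_norm _ 2) hy
  have hx2 : |x 2| ≤ R := le_trans (abs_le_norm x 2) hx
  have hkabs : |(k : ℝ)| ≤ 2 * R := by
    rw [abs_le] at habs2 hx2 ⊢; constructor <;> linarith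
  have hkN : k.natAbs ≤ N := by
    have h1 : ((|k| : ℤ) : ℝ) ≤ 2 * R := by push_cast; exact hkabs
    have h2 : ((|k| : ℤ) : ℝ) ≤ (N : ℝ) := le_trans h1 (Nat.le_ceil _)
    have h3 : (|k| : ℤ) ≤ (N : ℤ) := by exact_mod_cast h2
    rw [Int.abs_eq_natAbs] at h3
    exact_mod_cast h3
  -- bound on v
  have hBx : ‖(B ^ k) x‖ ≤ 3 ^ N * R := by
    calc ‖(B ^ k) x‖ ≤ 3 ^ k.natAbs * ‖x‖ := norm_Bz_le k x
      _ ≤ 3 ^ N * R := by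
          apply mul_le_mul _ hx (norm_nonneg x) (by positivity)
          exact pow_le_pow_right₀ (by norm_num) hkN
  have hvi : ∀ i : Fin 2, |(v i : ℝ)| ≤ R + 3 ^ N * R := by
    intro i
    have hidx : iv v k (Fin.castSucc i) = (v i : ℝ) := by
      fin_cases i <;> rfl
    have h1 : |(iv v k + (B ^ k) x) (Fin.castSucc i)| ≤ R :=
      le_trans (abs_le_norm _ _) hy
    have h2 : |((B ^ k) x) (Fin.castSucc i)| ≤ 3 ^ N * R :=
      le_trans (abs_le_norm _ _) hBx
    rw [Pi.add_apply, hidx] at h1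
    rw [abs_le] at h1 h2 ⊢
    constructor <;> linarith
  constructor
  · intro i _
    have := hvi i
    rw [Set.mem_Icc]
    have hMzR0 : R + 3 ^ N * R ≤ (Mz : ℝ) := by rw [hMz]; exact Int.le_ceil _
    have hle : (v i : ℝ) ≤ (Mz : ℝ) := le_trans (le_trans (le_abs_self _) this) hMzR0
    have hMzR : R + 3 ^ N * R ≤ (Mz : ℝ) := by rw [hMz]; exact Int.le_ceil _
    have hvi' := hvi i
    rw [abs_le] at hvi'
    have hge : ((-Mz : ℤ) : ℝ) ≤ (v i : ℝ) := by push_cast; linarith [hvi'.1]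
    exact ⟨by exact_mod_cast hge, by exact_mod_cast hle⟩
  · rw [Set.mem_Icc]
    omega

-- growth of Az powers
private lemma Az_preserve : ∀ n : ℕ, ∀ w : Fin 2 → ℤ,
    1 ≤ w 0 → 1 ≤ w 1 → 1 ≤ ((Az ^ n) w) 0 ∧ 1 ≤ ((Az ^ n) w) 1 := by
  intro n
  induction n with
  | zero => intro w h0 h1; simpa using ⟨h0, h1⟩
  | succ n ih =>
      intro w h0 h1
      have hs : (Az ^ (n + 1)) w = (Az ^ n) (Az w) := by
        rw [pow_succ]; rfl
      rw [hs]
      apply ih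
      · show 1 ≤ (2 * w 0 + w 1); omega
      · show 1 ≤ (w 0 + w 1); omega

private lemma Az_pow_ne (m : ℕ) (hm : 1 ≤ m) : 1 ≤ ((Az ^ m) ![1, 0]) 1 := by
  obtain ⟨n, rfl⟩ : ∃ n, m = n + 1 := ⟨m - 1, by omega⟩
  have hs : (Az ^ (n + 1)) ![1, 0] = (Az ^ n) (Az ![1, 0]) := by rw [pow_succ]; rfl
  have hAe : Az ![(1:ℤ), 0] = ![2, 1] := by
    funext i; fin_cases i <;> simp [Az_apply]
  rw [hs, hAe]
  exact (Az_preserve n ![2,1] (by norm_num) (by norm_num)).2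

private lemma rho_zero_pow (m : ℕ) : (rho 0 1) ^ m = rho 0 m := by
  induction m with
  | zero => simpa using rho_one.symm
  | succ n ih =>
      rw [pow_succ, ih, rho_mul]
      congr 1 <;> simp

private lemma rho_e1_pow (p : ℕ) : (rho ![1,0] 0) ^ p = rho (p • ![1,0]) 0 := by
  induction p with
  | zero => simpa using rho_one.symm
  | succ n ih =>
      rw [pow_succ, ih, rho_mul]
      congr 1
      simp [succ_nsmul]

private lemma not_va :
    ¬ ∃ H : Subgroup ↥Gam, H.FiniteIndex ∧ ∀ a b : H, a * b = b * a := by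
  rintro ⟨H, hFI, hcomm⟩
  set t : ↥Gam := ⟨rho 0 1, ⟨0, 1, rfl⟩⟩ with ht
  set a : ↥Gam := ⟨rho ![1,0] 0, ⟨![1,0], 0, rfl⟩⟩ with ha
  obtain ⟨m, hm0, _, hmH⟩ := Subgroup.exists_pow_mem_of_index_ne_zero hFI.index_ne_zero t
  obtain ⟨p, hp0, _, hpH⟩ := Subgroup.exists_pow_mem_of_index_ne_zero hFI.index_ne_zero a
  have hc := hcomm ⟨t ^ m, hmH⟩ ⟨a ^ p, hpH⟩
  have hv : (rho 0 1) ^ m * (rho ![1,0] 0) ^ p = (rho ![1,0] 0) ^ p * (rho 0 1) ^ m := by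
    have h1 := congrArg
      (fun z : H => ((z : ↥Gam) : (Fin 3 → ℝ) ≃ᵃ[ℝ] (Fin 3 → ℝ))) hc
    simpa [ht, ha] using h1
  rw [rho_zero_pow, rho_e1_pow, rho_mul, rho_mul] at hv
  obtain ⟨hvec, -⟩ := rho_param_eq hv
  have hvec' : (Az ^ (m:ℤ)) (p • ![1,0]) = p • ![(1:ℤ),0] := by
    have h2 : ((Az ^ (0:ℤ)) (0 : Fin 2 → ℤ)) = 0 := by simp
    rw [h2, add_zero, zero_add] at hvec
    exact hvec
  have hcoord := congrFun hvec' 1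
  rw [map_nsmul] at hcoord
  have hzc : ((Az ^ (m:ℤ))) ![(1:ℤ),0] = (Az ^ m) ![(1:ℤ),0] := by
    rw [zpow_natCast]
  have hge := Az_pow_ne m hm0
  have hc1 : (p • ((Az ^ (m:ℤ)) ![(1:ℤ),0])) 1 = (p:ℤ) * ((Az ^ m) ![(1:ℤ),0]) 1 := by
    rw [Pi.smul_apply, hzc, nsmul_eq_mul]
  have hc2 : ((p • ![(1:ℤ),0]) : Fin 2 → ℤ) 1 = 0 := by
    rw [Pi.smul_apply]; simp
  rw [hc1, hc2] at hcoord
  have : (1:ℤ) ≤ (p:ℤ) * ((Az ^ m) ![(1:ℤ),0]) 1 := by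
    have hp1 : (1:ℤ) ≤ (p:ℤ) := by exact_mod_cast hp0
    nlinarith
  omega

/-- Auslander–Markus: there exist `n ≥ 1` and a subgroup `Γ` of the invertible
affine transformations of `ℝⁿ` acting properly discontinuously, freely and
cocompactly on `ℝⁿ`, such that `Γ` has no abelian finite-index subgroup
(in particular `Γ` is not virtually `ℤⁿ`). -/
theorem exists_affine_crystallographic_not_virtually_abelian :
    ∃ n : ℕ, 1 ≤ n ∧
    ∃ Γ : Subgroup ((Fin n → ℝ) ≃ᵃ[ℝ] (Fin n → ℝ)),
      (∀ K : Set (Fin n → ℝ), IsCompact K →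
        {γ : Γ | ((γ : (Fin n → ℝ) ≃ᵃ[ℝ] (Fin n → ℝ)) '' K ∩ K).Nonempty}.Finite) ∧
      (∀ γ : Γ, ∀ x : Fin n → ℝ, (γ : (Fin n → ℝ) ≃ᵃ[ℝ] (Fin n → ℝ)) x = x → γ = 1) ∧
      (∃ K : Set (Fin n → ℝ), IsCompact K ∧
        ∀ x : Fin n → ℝ, ∃ γ : Γ, x ∈ (γ : (Fin n → ℝ) ≃ᵃ[ℝ] (Fin n → ℝ)) '' K) ∧
      ¬ ∃ H : Subgroup Γ, H.FiniteIndex ∧ ∀ a b : H, a * b = b * a := by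
  refine ⟨3, by norm_num, Gam, ?_, ?_, ?_, not_va⟩
  · intro K hK
    have hS : ((fun p : (Fin 2 → ℤ) × ℤ => rho p.1 p.2) ''
        {p | ((rho p.1 p.2) '' K ∩ K).Nonempty}).Finite :=
      (pd_lemma K hK).image _
    refine (hS.preimage (Set.injOn_of_injective Subtype.val_injective)).subset ?_
    rintro ⟨g, v, k, rfl⟩ hγ
    exact ⟨(v, k), hγ, rfl⟩
  · rintro ⟨g, v, k, rfl⟩ x h
    obtain ⟨hv, hk⟩ := free_lemma v k x h
    subst hv; subst hk
    exact Subtype.ext rho_one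
  · refine ⟨Set.Icc 0 1, isCompact_Icc, ?_⟩
    intro x
    obtain ⟨v, k, hx⟩ := cocompact_lemma x
    exact ⟨⟨rho v k, ⟨v, k, rfl⟩⟩, hx⟩

end AM
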